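/- Let ψ : X1 → X2 be a spectral map of spectral spaces, and let φ1 : X1 → 𝒳(X1), φ2 : X2 → 𝒳(X2) be the canonical embeddings x ↦ {x}^gen. Then the map 𝒳(ψ) : 𝒳(X1) → 𝒳(X2) defined by 𝒳(ψ)(C) := ψ(C)^gen is well-defined (i.e., ψ(C)^gen ∈ 𝒳(X2) for every C ∈ 𝒳(X1)) and spectral, it satisfies 𝒳(ψ) ∘ φ1 = φ2 ∘ ψ, and for every quasi-compact open subset Ω of X2 one has (𝒳(ψ))⁻¹(𝒰(Ω)) = 𝒰(ψ⁻¹(Ω)). -/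
import Mathlib


open Set TopologicalSpace Topology

/-- A subset of a topological space is *inverse-closed* if it is an intersection of a
family of quasi-compact open subsets. -/
def InvClosed {X : Type*} [TopologicalSpace X] (Y : Set X) : Prop :=
  ∃ 𝒪 : Set (Set X), (∀ U ∈ 𝒪, IsOpen U ∧ IsCompact U) ∧ Y = ⋂₀ 𝒪

/-- A subset is *saturated* if it is an intersection of open sets. -/
def IsSatd {X : Type*} [TopologicalSpace X] (Y : Set X) : Prop :=
  ∃ 𝒪 : Set (Set X), (∀ U ∈ 𝒪, IsOpen U) ∧ Y = ⋂₀ 𝒪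

/-- A topological space is *spectral* if it is T0, quasi-compact, sober, and the
quasi-compact open subsets form a basis closed under finite intersections. -/
def IsSpectralSpace (X : Type*) [TopologicalSpace X] : Prop :=
  T0Space X ∧ CompactSpace X ∧ QuasiSober X ∧
    IsTopologicalBasis {U : Set X | IsOpen U ∧ IsCompact U} ∧
    ∀ U V : Set X, IsOpen U → IsCompact U → IsOpen V → IsCompact V → IsCompact (U ∩ V)

/-- `𝒳(X)`: the nonempty inverse-closed subsets of `X`. -/
abbrev XCal (X : Type*) [TopologicalSpace X] : Type _ :=
  {Y : Set X // Y.Nonempty ∧ InvClosed Y}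

/-- The Zariski topology on `𝒳(X)`, with basic open sets `𝒰(Ω) = {Y : Y ⊆ Ω}` for `Ω`
quasi-compact open in `X`. -/
instance XCal.instTop (X : Type*) [TopologicalSpace X] : TopologicalSpace (XCal X) :=
  generateFrom {S : Set (XCal X) | ∃ Ω : Set X, IsOpen Ω ∧ IsCompact Ω ∧
    S = {Y : XCal X | (Y : Set X) ⊆ Ω}}

/-- The specialization-type order: `x ≤ y` iff `y ∈ closure {x}`. -/
def spord {X : Type*} [TopologicalSpace X] (x y : X) : Prop := y ∈ closure {x}

/-- Closure under generizations of a set `S`: all points `z ≤ s` for some `s ∈ S`. -/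
def genOf {X : Type*} [TopologicalSpace X] (S : Set X) : Set X :=
  {z : X | ∃ s ∈ S, spord z s}

/-- A map is *spectral* if preimages of quasi-compact open sets are quasi-compact open. -/
def SpecMap {X Y : Type*} [TopologicalSpace X] [TopologicalSpace Y] (f : X → Y) : Prop :=
  ∀ Ω : Set Y, IsOpen Ω → IsCompact Ω → IsOpen (f ⁻¹' Ω) ∧ IsCompact (f ⁻¹' Ω)

/-- The constructible topology on a spectral space: generated by the quasi-compact open
sets together with their complements. -/
def constructibleTop (X : Type*) [TopologicalSpace X] : TopologicalSpace X :=
  generateFrom ({U : Set X | IsOpen U ∧ IsCompact U} ∪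
    {S : Set X | ∃ U : Set X, IsOpen U ∧ IsCompact U ∧ S = Uᶜ})

/-- `s` is the supremum of `S` for the order induced by the topology. -/
def IsSupOf {X : Type*} [TopologicalSpace X] (S : Set X) (s : X) : Prop :=
  (∀ c ∈ S, spord c s) ∧ ∀ t : X, (∀ c ∈ S, spord c t) → spord s t

/-- A map is sup-preserving if it sends existing finite suprema to suprema. -/
def SupPreserving {X Y : Type*} [TopologicalSpace X] [TopologicalSpace Y] (f : X → Y) : Prop :=
  ∀ F : Set X, F.Finite → ∀ s : X, IsSupOf F s → IsSupOf (f '' F) (f s)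

/-- A map is open onto its image. -/
def OpenOntoImage {X Y : Type*} [TopologicalSpace X] [TopologicalSpace Y] (f : X → Y) : Prop :=
  ∀ V : Set X, IsOpen V → ∃ W : Set Y, IsOpen W ∧ f '' V = W ∩ Set.range f

section Aux

open Set TopologicalSpace Topology Filter

variable {X : Type*} [TopologicalSpace X]

lemma spord_refl (x : X) : spord x x := subset_closure rfl

lemma spord_trans {x y z : X} (h1 : spord x y) (h2 : spord y z) : spord x z :=
  (closure_minimal (Set.singleton_subset_iff.2 h1) isClosed_closure) h2

lemma subset_genOf (S : Set X) : S ⊆ genOf S := fun s hs => ⟨s, hs, spord_refl s⟩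

lemma genOf_subset_of_isOpen {S U : Set X} (hU : IsOpen U) (h : S ⊆ U) : genOf S ⊆ U := by
  rintro z ⟨s, hs, hzs⟩
  by_contra hz
  exact (closure_minimal (show ({z} : Set X) ⊆ Uᶜ from Set.singleton_subset_iff.2 hz) hU.isClosed_compl) hzs (h hs)

/-- Patch-type compactness: a family of sets, each closed or quasi-compact open, with the
finite intersection property, has nonempty intersection in a spectral space. -/
lemma lemA (hX : IsSpectralSpace X) (𝒮 : Set (Set X))
    (hmem : ∀ s ∈ 𝒮, IsClosed s ∨ (IsOpen s ∧ IsCompact s))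
    (hfip : ∀ 𝒯 ⊆ 𝒮, 𝒯.Finite → (⋂₀ 𝒯).Nonempty) :
    (⋂₀ 𝒮).Nonempty := by
  obtain ⟨hT0, hComp, hSober, hBasis, hInter⟩ := hX
  haveI := hComp
  haveI : (Filter.generate 𝒮).NeBot := Filter.generate_neBot_iff.2 fun t ht htf => hfip t ht htf
  set F : Ultrafilter X := Ultrafilter.of (Filter.generate 𝒮) with hF
  have hSF : ∀ s ∈ 𝒮, s ∈ F := fun s hs =>
    Ultrafilter.of_le (Filter.generate 𝒮) (Filter.mem_generate_of_mem hs)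
  set Bad : Set (Set X) := {U | IsOpen U ∧ IsCompact U ∧ U ∉ F} with hBad
  set Z : Set X := (⋃₀ Bad)ᶜ with hZ
  have hZclosed : IsClosed Z := (isOpen_sUnion fun U hU => hU.1).isClosed_compl
  -- key (a)
  have keyA : ∀ W : Set X, IsOpen W → IsCompact W → W ∈ F → (W ∩ Z).Nonempty := by
    intro W hWo hWc hWF
    by_contra hempty
    have hcov : W ⊆ ⋃ U : Bad, (U : Set X) := by
      intro w hw
      have : w ∉ Z := fun hwZ => hempty ⟨w, hw, hwZ⟩
      simp only [hZ, Set.mem_compl_iff, not_not] at this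
      obtain ⟨U, hU, hwU⟩ := this
      exact Set.mem_iUnion.2 ⟨⟨U, hU⟩, hwU⟩
    obtain ⟨t, ht⟩ := hWc.elim_finite_subcover (fun U : Bad => (U : Set X))
      (fun U => U.2.1) hcov
    have hcompl : ∀ U : Bad, U ∈ t → ((U : Set X))ᶜ ∈ F := fun U _ =>
      Ultrafilter.compl_mem_iff_notMem.2 U.2.2.2
    have hmemF : W ∩ ⋂ U ∈ t, ((U : Set X))ᶜ ∈ F :=
      Filter.inter_mem hWF ((Filter.biInter_finset_mem t).2 hcompl)
    obtain ⟨w, hwW, hwI⟩ := Ultrafilter.nonempty_of_mem hmemF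
    obtain ⟨U, hUt, hwU⟩ := Set.mem_iUnion₂.1 (ht hwW)
    exact (Set.mem_iInter₂.1 hwI U hUt) hwU
  have hZne : Z.Nonempty := by
    have := keyA Set.univ isOpen_univ isCompact_univ Filter.univ_mem
    simpa using this
  -- (c): any open meeting Z contains a qc open in F
  have keyC : ∀ V : Set X, IsOpen V → (Z ∩ V).Nonempty →
      ∃ W : Set X, IsOpen W ∧ IsCompact W ∧ W ∈ F ∧ W ⊆ V := by
    rintro V hV ⟨z, hzZ, hzV⟩
    obtain ⟨W, hWb, hzW, hWV⟩ := hBasis.exists_subset_of_mem_open hzV hV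
    refine ⟨W, hWb.1, hWb.2, ?_, hWV⟩
    by_contra hWF
    exact hzZ ⟨W, ⟨hWb.1, hWb.2, hWF⟩, hzW⟩
  have hZirr : IsIrreducible Z := by
    refine ⟨hZne, fun U V hU hV hZU hZV => ?_⟩
    obtain ⟨W, hWo, hWc, hWF, hWU⟩ := keyC U hU hZU
    obtain ⟨W', hW'o, hW'c, hW'F, hW'V⟩ := keyC V hV hZV
    obtain ⟨w, hwWW', hwZ⟩ := keyA (W ∩ W') (hWo.inter hW'o)
      (hInter W W' hWo hWc hW'o hW'c) (Filter.inter_mem hWF hW'F)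
    exact ⟨w, hwZ, hWU hwWW'.1, hW'V hwWW'.2⟩
  obtain ⟨ξ, hξ⟩ := hSober.sober hZirr hZclosed
  have hξZ : ξ ∈ Z := hξ ▸ subset_closure rfl
  refine ⟨ξ, fun s hs => ?_⟩
  rcases hmem s hs with hclosed | ⟨hso, hsc⟩
  · -- closed case: Z ⊆ s
    by_contra hξs
    have : (Z ∩ sᶜ).Nonempty := ⟨ξ, hξZ, hξs⟩
    obtain ⟨W, hWo, hWc, hWF, hWs⟩ := keyC sᶜ hclosed.isOpen_compl this
    obtain ⟨w, hwW, hws⟩ := Ultrafilter.nonempty_of_mem (Filter.inter_mem hWF (hSF s hs))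
    exact hWs hwW hws
  · -- qc open case
    obtain ⟨w, hws, hwZ⟩ := keyA s hso hsc (hSF s hs)
    have : w ∈ closure {ξ} := hξ ▸ hwZ
    obtain ⟨y, hy, hy'⟩ := mem_closure_iff.1 this s hso hws
    rwa [Set.mem_singleton_iff.1 hy'] at hy

/-- Inverse-closed subsets of a spectral space are quasi-compact. -/
lemma invClosed_isCompact (hX : IsSpectralSpace X) {C : Set X} (hC : InvClosed C) :
    IsCompact C := by
  obtain ⟨𝒪, h𝒪, rfl⟩ := hC
  classical
  apply isCompact_of_finite_subcover
  intro ι U hU hcov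
  by_contra hnofin
  push_neg at hnofin
  set 𝒮 : Set (Set X) := 𝒪 ∪ (Set.range fun i => (U i)ᶜ) with h𝒮
  have hmem : ∀ s ∈ 𝒮, IsClosed s ∨ (IsOpen s ∧ IsCompact s) := by
    rintro s (hs | ⟨i, rfl⟩)
    · exact Or.inr ⟨(h𝒪 s hs).1, (h𝒪 s hs).2⟩
    · exact Or.inl (hU i).isClosed_compl
  have hfip : ∀ 𝒯 ⊆ 𝒮, 𝒯.Finite → (⋂₀ 𝒯).Nonempty := by
    intro 𝒯 h𝒯 h𝒯f
    set 𝒯₂ : Set (Set X) := 𝒯 \ 𝒪 with h𝒯₂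
    have h𝒯₂f : 𝒯₂.Finite := h𝒯f.subset Set.diff_subset
    have hrange : ∀ s : 𝒯₂, ∃ i, (U i)ᶜ = s := by
      rintro ⟨s, hs𝒯, hs𝒪⟩
      rcases h𝒯 hs𝒯 with h | ⟨i, hi⟩
      · exact absurd h hs𝒪
      · exact ⟨i, hi⟩
    haveI := h𝒯₂f.fintype
    choose pick hpick using hrange
    set t : Finset ι := Finset.univ.image pick with htdef
    obtain ⟨c, hcC, hcU⟩ : ∃ c ∈ ⋂₀ 𝒪, ∀ i ∈ t, c ∉ U i := by
      have := hnofin t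
      rw [Set.not_subset] at this
      obtain ⟨c, hc, hc'⟩ := this
      exact ⟨c, hc, fun i hi hci => hc' (Set.mem_biUnion hi hci)⟩
    refine ⟨c, fun s hs => ?_⟩
    by_cases hs𝒪 : s ∈ 𝒪
    · exact hcC s hs𝒪
    · have hs₂ : s ∈ 𝒯₂ := ⟨hs, hs𝒪⟩
      have hit : pick ⟨s, hs₂⟩ ∈ t := Finset.mem_image_of_mem pick (Finset.mem_univ _)
      have h3 : (U (pick ⟨s, hs₂⟩))ᶜ = s := hpick ⟨s, hs₂⟩
      exact h3 ▸ hcU _ hit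
  obtain ⟨x, hx⟩ := lemA hX 𝒮 hmem hfip
  have hxC : x ∈ ⋂₀ 𝒪 := fun s hs => hx s (Set.mem_union_left _ hs)
  obtain ⟨i, hxi⟩ := Set.mem_iUnion.1 (hcov hxC)
  exact hx ((U i)ᶜ) (Set.mem_union_right _ ⟨i, rfl⟩) hxi

/-- `genOf` of a compact set in a spectral space is inverse-closed. -/
lemma genOf_invClosed (hX : IsSpectralSpace X) {K : Set X} (hK : IsCompact K) :
    InvClosed (genOf K) := by
  refine ⟨{Ω | IsOpen Ω ∧ IsCompact Ω ∧ K ⊆ Ω}, fun U hU => ⟨hU.1, hU.2.1⟩, ?_⟩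
  apply subset_antisymm
  · exact Set.subset_sInter fun Ω hΩ => genOf_subset_of_isOpen hΩ.1 hΩ.2.2
  · intro z hz
    by_contra hzg
    set V : Set X := (closure {z})ᶜ with hV
    have hVo : IsOpen V := isClosed_closure.isOpen_compl
    have hKV : K ⊆ V := fun k hk hkc => hzg ⟨k, hk, hkc⟩
    set ι := {W : Set X // IsOpen W ∧ IsCompact W ∧ W ⊆ V} with hι
    have hcov : K ⊆ ⋃ W : ι, (W : Set X) := by
      intro k hk
      obtain ⟨W, hWb, hkW, hWV⟩ := hX.2.2.2.1.exists_subset_of_mem_open (hKV hk) hVo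
      exact Set.mem_iUnion.2 ⟨⟨W, hWb.1, hWb.2, hWV⟩, hkW⟩
    obtain ⟨t, ht⟩ := hK.elim_finite_subcover (fun W : ι => (W : Set X)) (fun W => W.2.1) hcov
    set Ω : Set X := ⋃ W ∈ t, (W : Set X) with hΩdef
    have hΩmem : Ω ∈ {Ω | IsOpen Ω ∧ IsCompact Ω ∧ K ⊆ Ω} :=
      ⟨isOpen_biUnion fun W _ => W.2.1, t.isCompact_biUnion fun W _ => W.2.2.1, ht⟩
    have hzΩ : z ∈ Ω := hz Ω hΩmem
    obtain ⟨W, _, hzW⟩ := Set.mem_iUnion₂.1 hzΩ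
    exact W.2.2.2 hzW (subset_closure rfl)

/-- The basic open sets `𝒰(Ω)` form a topological basis of `𝒳(X)`. -/
lemma xcal_basis (hX : IsSpectralSpace X) :
    IsTopologicalBasis (α := XCal X) {S : Set (XCal X) | ∃ Ω : Set X, IsOpen Ω ∧ IsCompact Ω ∧
      S = {Y : XCal X | (Y : Set X) ⊆ Ω}} := by
  haveI := hX.2.1
  refine ⟨?_, ?_, rfl⟩
  · rintro t₁ ⟨Ω₁, h₁o, h₁c, rfl⟩ t₂ ⟨Ω₂, h₂o, h₂c, rfl⟩ Y hY
    refine ⟨{Z : XCal X | (Z : Set X) ⊆ Ω₁ ∩ Ω₂},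
      ⟨Ω₁ ∩ Ω₂, h₁o.inter h₂o, hX.2.2.2.2 Ω₁ Ω₂ h₁o h₁c h₂o h₂c, rfl⟩,
      Set.subset_inter hY.1 hY.2, fun Z hZ => ⟨hZ.trans Set.inter_subset_left,
        hZ.trans Set.inter_subset_right⟩⟩
  · apply Set.eq_univ_of_univ_subset
    intro Y _
    exact Set.mem_sUnion.2 ⟨{Z : XCal X | (Z : Set X) ⊆ Set.univ},
      ⟨Set.univ, isOpen_univ, isCompact_univ, rfl⟩, Set.subset_univ _⟩

/-- `𝒰(Ω)` is quasi-compact in `𝒳(X)` for `Ω` quasi-compact open. -/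
lemma ucal_isCompact (hX : IsSpectralSpace X) {Ω : Set X} (hΩo : IsOpen Ω) (hΩc : IsCompact Ω) :
    IsCompact {Y : XCal X | (Y : Set X) ⊆ Ω} := by
  rcases Set.eq_empty_or_nonempty Ω with rfl | hne
  · convert isCompact_empty
    ext Y
    simp only [Set.mem_setOf_eq, Set.subset_empty_iff, Set.mem_empty_iff_false, iff_false]
    exact fun h => Y.2.1.ne_empty h
  · apply isCompact_of_finite_subcover
    intro ι U hU hcov
    set Y₀ : XCal X := ⟨Ω, hne, ⟨{Ω}, by simp [hΩo, hΩc], by simp⟩⟩ with hY₀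
    have hY₀mem : Y₀ ∈ ⋃ i, U i := hcov (by simp [hY₀])
    obtain ⟨i, hi⟩ := Set.mem_iUnion.1 hY₀mem
    obtain ⟨b, ⟨Ω', hΩ'o, hΩ'c, rfl⟩, hY₀b, hbU⟩ :=
      (xcal_basis hX).exists_subset_of_mem_open hi (hU i)
    refine ⟨{i}, fun Y hY => ?_⟩
    have : (Y : Set X) ⊆ Ω' := hY.trans hY₀b
    exact Set.mem_biUnion (Finset.mem_singleton_self i) (hbU this)

lemma isOpen_ucal {Ω : Set X} (hΩo : IsOpen Ω) (hΩc : IsCompact Ω) :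
    IsOpen {Y : XCal X | (Y : Set X) ⊆ Ω} :=
  TopologicalSpace.isOpen_generateFrom_of_mem ⟨Ω, hΩo, hΩc, rfl⟩

end Aux

/-- For a spectral map `ψ : X₁ → X₂` of spectral spaces, the map
`𝒳(ψ) : C ↦ ψ(C)^gen` is well defined and spectral, satisfies
`𝒳(ψ) ∘ φ₁ = φ₂ ∘ ψ`, and `(𝒳(ψ))⁻¹(𝒰(Ω)) = 𝒰(ψ⁻¹(Ω))` for every quasi-compact
open `Ω ⊆ X₂`. -/

theorem stmt12 {X₁ X₂ : Type*} [TopologicalSpace X₁] [TopologicalSpace X₂]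
    (hX₁ : IsSpectralSpace X₁) (hX₂ : IsSpectralSpace X₂)
    (ψ : X₁ → X₂) (hψ : SpecMap ψ) :
    (∀ C : XCal X₁, (genOf (ψ '' (C : Set X₁))).Nonempty ∧
      InvClosed (genOf (ψ '' (C : Set X₁)))) ∧
    ∀ Ψ : XCal X₁ → XCal X₂,
      (∀ C : XCal X₁, (Ψ C : Set X₂) = genOf (ψ '' (C : Set X₁))) →
      SpecMap Ψ ∧
      (∀ (x : X₁) (C : XCal X₁) (D : XCal X₂),
        (C : Set X₁) = genOf {x} → (D : Set X₂) = genOf {ψ x} → Ψ C = D) ∧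
      (∀ Ω : Set X₂, IsOpen Ω → IsCompact Ω →
        Ψ ⁻¹' {Y : XCal X₂ | (Y : Set X₂) ⊆ Ω} =
          {Y : XCal X₁ | (Y : Set X₁) ⊆ ψ ⁻¹' Ω}) := by
  have hcont : Continuous ψ :=
    (hX₂.2.2.2.1).continuous_iff.2 fun s hs => (hψ s hs.1 hs.2).1
  have part1 : ∀ C : XCal X₁, (genOf (ψ '' (C : Set X₁))).Nonempty ∧
      InvClosed (genOf (ψ '' (C : Set X₁))) := by
    intro C
    obtain ⟨⟨c, hc⟩, hCinv⟩ := C.2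
    exact ⟨⟨ψ c, subset_genOf _ (Set.mem_image_of_mem ψ hc)⟩,
      genOf_invClosed hX₂ ((invClosed_isCompact hX₁ hCinv).image hcont)⟩
  refine ⟨part1, ?_⟩
  intro Ψ hΨ
  have bullet4 : ∀ Ω : Set X₂, IsOpen Ω → IsCompact Ω →
      Ψ ⁻¹' {Y : XCal X₂ | (Y : Set X₂) ⊆ Ω} =
        {Y : XCal X₁ | (Y : Set X₁) ⊆ ψ ⁻¹' Ω} := by
    intro Ω hΩo hΩc
    ext C
    simp only [Set.mem_preimage, Set.mem_setOf_eq, hΨ C]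
    constructor
    · intro h x hx
      exact h (subset_genOf _ (Set.mem_image_of_mem ψ hx))
    · intro h
      exact genOf_subset_of_isOpen hΩo (Set.image_subset_iff.2 h)
  refine ⟨?_, ?_, bullet4⟩
  · -- Ψ is spectral
    have hΨcont : Continuous Ψ := by
      refine (xcal_basis hX₂).continuous_iff.2 ?_
      rintro s ⟨Ω, hΩo, hΩc, rfl⟩
      rw [bullet4 Ω hΩo hΩc]
      exact isOpen_ucal (hψ Ω hΩo hΩc).1 (hψ Ω hΩo hΩc).2
    intro S hSo hSc
    refine ⟨hSo.preimage hΨcont, ?_⟩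
    obtain ⟨𝒮', h𝒮'b, rfl⟩ := (xcal_basis hX₂).open_eq_sUnion hSo
    have key : ∀ b : Set (XCal X₂), b ∈ 𝒮' → IsCompact (Ψ ⁻¹' b) ∧ IsOpen b := by
      intro b hb
      obtain ⟨Ω, hΩo, hΩc, rfl⟩ := h𝒮'b hb
      refine ⟨?_, isOpen_ucal hΩo hΩc⟩
      rw [bullet4 Ω hΩo hΩc]
      exact ucal_isCompact hX₁ (hψ Ω hΩo hΩc).1 (hψ Ω hΩo hΩc).2
    obtain ⟨t, ht⟩ := hSc.elim_finite_subcover (fun b : 𝒮' => (b : Set (XCal X₂)))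
      (fun b => (key b b.2).2) Set.sUnion_eq_iUnion.subset
    have heq : ⋃₀ 𝒮' = ⋃ b ∈ t, ((b : Set (XCal X₂))) :=
      subset_antisymm ht (Set.iUnion₂_subset fun b _ => Set.subset_sUnion_of_mem b.2)
    rw [heq, Set.preimage_iUnion₂]
    exact t.isCompact_biUnion fun b _ => (key b b.2).1
  · -- compatibility with the canonical embeddings
    intro x C D hC hD
    apply Subtype.ext
    rw [hΨ C, hC, hD]
    apply subset_antisymm
    · rintro z ⟨s, ⟨y, hy, rfl⟩, hzs⟩
      obtain ⟨x', hx', hyx⟩ := hy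
      rw [Set.mem_singleton_iff] at hx'
      rw [hx'] at hyx
      have hmono : spord (ψ y) (ψ x) := by
        have h1 : ψ x ∈ ψ '' closure {y} := Set.mem_image_of_mem ψ hyx
        have h2 := (image_closure_subset_closure_image hcont) h1
        simpa [Set.image_singleton, spord] using h2
      exact ⟨ψ x, rfl, spord_trans hzs hmono⟩
    · rintro z ⟨s, hs, hzs⟩
      rw [Set.mem_singleton_iff] at hs
      rw [hs] at hzs
      exact ⟨ψ x, ⟨x, subset_genOf _ rfl, rfl⟩, hzs⟩
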